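/- Let p and q be compactly supported Borel probability measures on ℝ^n. Then the β-admissible Wasserstein distance D_W^β(p, q) is nonincreasing in β, and inf_{β > 0} D_W^β(p, q) = ∫ d(x, supp(q)) dp(x).ration Consequently, inf_{β1 > 0, β2 > 0} D_W^{β1,β2}(p, q) = D_△(p, q), i.e. the limit of D_W^{β1,β2}(p, q) as β1, β2 → ∞ equals the symmetric support difference divergence. -/

import Mathlib

open MeasureTheory Metric Set
open scoped ENNReal

noncomputable section

/-- The topological support of a Borel measure: the smallest closed set of full measure,
realized as the intersection of all closed sets whose complement is null. -/
def msupport {X : Type*} [TopologicalSpace X] [MeasurableSpace X] (μ : Measure X) : Set X :=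
  ⋂₀ {S : Set X | IsClosed S ∧ μ Sᶜ = 0}

/-- The symmetric support difference (SSD) divergence
`D_△(p, q) = ∫ d(x, supp q) dp + ∫ d(x, supp p) dq` (valued in `ℝ≥0∞`). -/
def Dtri {X : Type*} [MeasurableSpace X] [PseudoMetricSpace X] (p q : Measure X) : ℝ≥0∞ :=
  (∫⁻ x, ENNReal.ofReal (infDist x (msupport q)) ∂p) +
  (∫⁻ x, ENNReal.ofReal (infDist x (msupport p)) ∂q)

/-- The Wasserstein-1 distance: infimum of `∫ d(x, y) dγ` over couplings of `p` and `q`. -/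
def DW {X : Type*} [MeasurableSpace X] [PseudoMetricSpace X] (p q : Measure X) : ℝ≥0∞ :=
  ⨅ γ ∈ {γ : Measure (X × X) | γ.map Prod.fst = p ∧ γ.map Prod.snd = q},
    ∫⁻ z, ENNReal.ofReal (dist z.1 z.2) ∂γ

/-- The β-admissible Wasserstein distance: infimum of `∫ d(x, y) dγ` over measures `γ`
whose first marginal is `p` and whose second marginal is `≤ (1 + β) • q`. -/
def DWbeta {X : Type*} [MeasurableSpace X] [PseudoMetricSpace X]
    (β : ℝ) (p q : Measure X) : ℝ≥0∞ :=
  ⨅ γ ∈ {γ : Measure (X × X) |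
      γ.map Prod.fst = p ∧ γ.map Prod.snd ≤ (ENNReal.ofReal (1 + β)) • q},
    ∫⁻ z, ENNReal.ofReal (dist z.1 z.2) ∂γ

/-- The symmetrized (β₁, β₂)-admissible Wasserstein distance. -/
def DWsym {X : Type*} [MeasurableSpace X] [PseudoMetricSpace X]
    (β₁ β₂ : ℝ) (p q : Measure X) : ℝ≥0∞ :=
  DWbeta β₁ p q + DWbeta β₂ q p

set_option linter.unusedSectionVars false

variable {X : Type*} [MeasurableSpace X] [MetricSpace X] [BorelSpace X]
  [SecondCountableTopology X]

lemma msupport_closed (μ : Measure X) : IsClosed (msupport μ) :=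
  isClosed_sInter fun _ hS => hS.1

set_option linter.unusedSectionVars false in
lemma measure_msupport_compl (μ : Measure X) : μ (msupport μ)ᶜ = 0 := by
  have : (msupport μ)ᶜ = ⋃₀ {U : Set X | IsOpen U ∧ μ U = 0} := by
    ext x
    simp only [msupport, mem_compl_iff, mem_sInter, mem_sUnion, mem_setOf_eq, not_forall]
    constructor
    · rintro ⟨S, ⟨hcl, hnull⟩, hx⟩
      exact ⟨Sᶜ, ⟨hcl.isOpen_compl, hnull⟩, hx⟩
    · rintro ⟨U, ⟨ho, hnull⟩, hx⟩
      exact ⟨Uᶜ, ⟨ho.isClosed_compl, by simpa using hnull⟩, by simpa using hx⟩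
  rw [this]
  obtain ⟨T, hTc, hTsub, hTeq⟩ := TopologicalSpace.isOpen_sUnion_countable
    {U : Set X | IsOpen U ∧ μ U = 0} (fun U hU => hU.1)
  rw [← hTeq]
  exact (measure_sUnion_null_iff hTc).2 fun U hU => (hTsub hU).2

lemma measure_ball_pos_of_mem_msupport {μ : Measure X} {y : X} (hy : y ∈ msupport μ)
    {ε : ℝ} (hε : 0 < ε) : 0 < μ (ball y ε) := by
  rcases eq_or_ne (μ (ball y ε)) 0 with h | h
  · exfalso
    have : msupport μ ⊆ (ball y ε)ᶜ := sInter_subset_of_mem ⟨isOpen_ball.isClosed_compl, by simpa⟩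
    exact (this hy) (mem_ball_self hε)
  · exact h.bot_lt

lemma msupport_nonempty (μ : Measure X) [IsProbabilityMeasure μ] : (msupport μ).Nonempty := by
  rw [nonempty_iff_ne_empty]
  intro h
  have := measure_msupport_compl μ
  rw [h, compl_empty, measure_univ] at this
  simp at this

variable (p q : Measure X) [IsProbabilityMeasure p] [IsProbabilityMeasure q]

lemma measurable_infDist_ofReal (S : Set X) :
    Measurable fun x => ENNReal.ofReal (infDist x S) :=
  (ENNReal.continuous_ofReal.comp (continuous_infDist_pt S)).measurable

lemma DWbeta_ge (β : ℝ) :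
    ∫⁻ x, ENNReal.ofReal (infDist x (msupport q)) ∂p ≤ DWbeta β p q := by
  apply le_iInf₂
  rintro γ ⟨h1, h2⟩
  have hmeas : MeasurableSet (msupport q)ᶜ := (msupport_closed q).measurableSet.compl
  have hae : ∀ᵐ z ∂γ, z.2 ∈ msupport q := by
    rw [ae_iff]
    have : {z : X × X | ¬ z.2 ∈ msupport q} = Prod.snd ⁻¹' (msupport q)ᶜ := rfl
    rw [this, ← Measure.map_apply measurable_snd hmeas]
    have := h2 (msupport q)ᶜ
    simp only [Measure.smul_apply, smul_eq_mul] at this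
    rw [measure_msupport_compl q, mul_zero] at this
    exact le_antisymm (this) zero_le
  calc ∫⁻ x, ENNReal.ofReal (infDist x (msupport q)) ∂p
      = ∫⁻ z, ENNReal.ofReal (infDist z.1 (msupport q)) ∂γ := by
        rw [← h1, lintegral_map (measurable_infDist_ofReal _) measurable_fst]
    _ ≤ ∫⁻ z, ENNReal.ofReal (dist z.1 z.2) ∂γ := by
        apply lintegral_mono_ae
        filter_upwards [hae] with z hz
        exact ENNReal.ofReal_le_ofReal (infDist_le_dist_of_mem hz)

lemma I_lt_top (hpc : IsCompact (msupport p)) :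
    ∫⁻ x, ENNReal.ofReal (infDist x (msupport q)) ∂p < ∞ := by
  obtain ⟨y₀, hy₀⟩ := msupport_nonempty q
  obtain ⟨R, hR⟩ := hpc.isBounded.subset_closedBall y₀
  have hae : ∀ᵐ x ∂p, x ∈ msupport p := by
    rw [ae_iff]; exact measure_msupport_compl p
  calc ∫⁻ x, ENNReal.ofReal (infDist x (msupport q)) ∂p
      ≤ ∫⁻ _, ENNReal.ofReal R ∂p := by
        apply lintegral_mono_ae
        filter_upwards [hae] with x hx
        apply ENNReal.ofReal_le_ofReal
        calc infDist x (msupport q) ≤ dist x y₀ := infDist_le_dist_of_mem hy₀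
          _ ≤ R := by simpa [mem_closedBall] using hR hx
    _ = ENNReal.ofReal R := by simp
    _ < ∞ := ENNReal.ofReal_lt_top

lemma iInf_DWbeta_le (hpc : IsCompact (msupport p)) (hqc : IsCompact (msupport q)) :
    ⨅ β ∈ Ioi (0:ℝ), DWbeta β p q
      ≤ ∫⁻ x, ENNReal.ofReal (infDist x (msupport q)) ∂p := by
  set I := ∫⁻ x, ENNReal.ofReal (infDist x (msupport q)) ∂p with hIdef
  apply ENNReal.le_of_forall_pos_le_add
  intro ε hε _
  set δ : ℝ := (ε : ℝ) / 2 with hδdef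
  have hδ : 0 < δ := by positivity
  have hSqne : (msupport q).Nonempty := msupport_nonempty q
  obtain ⟨y₀, hy₀⟩ := hSqne
  obtain ⟨t, ht⟩ := hqc.elim_finite_subcover (fun y : msupport q => ball (y : X) δ)
    (fun _ => isOpen_ball) (fun y hy => mem_iUnion.2 ⟨⟨y, hy⟩, mem_ball_self hδ⟩)
  classical
  set l := t.toList with hldef
  set c : ℕ → X := fun j => if h : j < l.length then ((l.get ⟨j, h⟩ : msupport q) : X) else y₀
    with hcdef
  have hcmem : ∀ j, c j ∈ msupport q := by
    intro j
    rw [hcdef]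
    dsimp only
    split
    · exact Subtype.coe_prop _
    · exact hy₀
  have hcover : ∀ x ∈ msupport q, ∃ j, dist x (c j) < δ := by
    intro x hx
    obtain ⟨y, hyt, hxy⟩ := mem_iUnion₂.1 (ht hx)
    obtain ⟨nidx, hn⟩ := List.mem_iff_get.1 (Finset.mem_toList.2 hyt)
    refine ⟨nidx.1, ?_⟩
    have : c nidx.1 = (y : X) := by
      rw [hcdef]
      dsimp only
      rw [dif_pos nidx.isLt]
      exact congrArg Subtype.val hn
    rw [this]
    simpa [mem_ball] using hxy
  set C : ℕ → Set X := fun j => {x | dist x (c j) ≤ infDist x (msupport q) + δ} with hCdef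
  have hCmeas : ∀ j, MeasurableSet (C j) := by
    intro j
    exact (isClosed_le (continuous_id.dist continuous_const)
      ((continuous_infDist_pt _).add continuous_const)).measurableSet
  have hCunion : ⋃ j, C j = univ := by
    apply eq_univ_of_forall
    intro x
    obtain ⟨y, hymem, hyeq⟩ := hqc.exists_infDist_eq_dist (msupport_nonempty q) x
    obtain ⟨j, hj⟩ := hcover y hymem
    refine mem_iUnion.2 ⟨j, ?_⟩
    have : dist x (c j) ≤ dist x y + dist y (c j) := dist_triangle _ _ _
    simp only [hCdef, mem_setOf_eq]
    rw [hyeq] at *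
    linarith
  set D : ℕ → Set X := disjointed C with hDdef
  have hDmeas : ∀ j, MeasurableSet (D j) := MeasurableSet.disjointed hCmeas
  have hDdisj : Pairwise (Function.onFun Disjoint D) := disjoint_disjointed C
  have hDunion : ⋃ j, D j = univ := by rw [hDdef, iUnion_disjointed, hCunion]
  have hDsub : ∀ j, D j ⊆ C j := fun j => disjointed_subset C j
  set B : ℕ → Set X := fun j => ball (c j) δ with hBdef
  have hqB : ∀ j, 0 < q (B j) := fun j => measure_ball_pos_of_mem_msupport (hcmem j) hδ
  set ν : ℕ → Measure X := fun j => (q (B j))⁻¹ • q.restrict (B j) with hνdef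
  have hν1 : ∀ j, ν j univ = 1 := by
    intro j
    simp only [hνdef, Measure.smul_apply, Measure.restrict_apply_univ, smul_eq_mul]
    exact ENNReal.inv_mul_cancel (hqB j).ne' (measure_ne_top q _)
  set γ : Measure (X × X) := Measure.sum fun j => (p.restrict (D j)).prod (ν j) with hγdef
  -- first marginal
  have hfst : γ.map Prod.fst = p := by
    rw [hγdef, Measure.map_sum measurable_fst.aemeasurable]
    have heq : ∀ j, ((p.restrict (D j)).prod (ν j)).map Prod.fst = p.restrict (D j) := by
      intro j
      haveI : IsProbabilityMeasure (ν j) := ⟨hν1 j⟩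
      rw [Measure.map_fst_prod, hν1 j, one_smul]
    rw [funext heq, ← Measure.restrict_iUnion hDdisj hDmeas, hDunion, Measure.restrict_univ]
  -- the admissibility constant
  set F : Finset X := insert y₀ (t.image Subtype.val) with hFdef
  have hFne : F.Nonempty := Finset.insert_nonempty _ _
  have hcF : ∀ j, c j ∈ F := by
    intro j
    rw [hcdef]
    dsimp only
    split
    · exact Finset.mem_insert_of_mem (Finset.mem_image.2 ⟨_, Finset.mem_toList.1 (List.get_mem _ _), rfl⟩)
    · exact Finset.mem_insert_self _ _
  set m : ℝ≥0∞ := F.inf' hFne fun y => q (ball y δ) with hmdef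
  have hmle : ∀ j, m ≤ q (B j) := fun j => Finset.inf'_le _ (hcF j)
  have hm0 : 0 < m := by
    rw [hmdef, Finset.lt_inf'_iff]
    intro y hy
    rcases Finset.mem_insert.1 hy with h | h
    · subst h
      exact measure_ball_pos_of_mem_msupport hy₀ hδ
    · obtain ⟨z, _, rfl⟩ := Finset.mem_image.1 h
      exact measure_ball_pos_of_mem_msupport z.coe_prop hδ
  have hmtop : m ≠ ∞ := ne_top_of_le_ne_top (measure_ne_top q _) (hmle 0)
  set β : ℝ := (m⁻¹).toReal with hβdef
  have hβpos : 0 < β :=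
    ENNReal.toReal_pos (ENNReal.inv_ne_zero.2 hmtop) (ENNReal.inv_ne_top.2 hm0.ne')
  have hβof : m⁻¹ ≤ ENNReal.ofReal (1 + β) := by
    calc m⁻¹ = ENNReal.ofReal β := by
          rw [hβdef, ENNReal.ofReal_toReal (ENNReal.inv_ne_top.2 hm0.ne')]
      _ ≤ ENNReal.ofReal (1 + β) := ENNReal.ofReal_le_ofReal (by linarith)
  -- second marginal
  have hsnd : γ.map Prod.snd ≤ ENNReal.ofReal (1 + β) • q := by
    rw [hγdef, Measure.map_sum measurable_snd.aemeasurable]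
    have heq : ∀ j, ((p.restrict (D j)).prod (ν j)).map Prod.snd = p (D j) • ν j := by
      intro j
      haveI : IsProbabilityMeasure (ν j) := ⟨hν1 j⟩
      rw [Measure.map_snd_prod, Measure.restrict_apply_univ]
    rw [funext heq]
    refine Measure.le_intro fun s hs _ => ?_
    rw [Measure.sum_apply _ hs]
    have hterm : ∀ j, (p (D j) • ν j) s ≤ p (D j) * (m⁻¹ * q s) := by
      intro j
      simp only [Measure.smul_apply, smul_eq_mul, hνdef]
      refine mul_le_mul_right ?_ _
      rw [Measure.restrict_apply hs]
      calc (q (B j))⁻¹ * q (s ∩ B j) ≤ (q (B j))⁻¹ * q s :=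
            mul_le_mul_right (measure_mono (inter_subset_left)) _
        _ ≤ m⁻¹ * q s := mul_le_mul_left (ENNReal.inv_le_inv' (hmle j)) _
    calc ∑' j, (p (D j) • ν j) s ≤ ∑' j, p (D j) * (m⁻¹ * q s) := ENNReal.tsum_le_tsum hterm
      _ = (∑' j, p (D j)) * (m⁻¹ * q s) := ENNReal.tsum_mul_right
      _ = m⁻¹ * q s := by
          rw [← measure_iUnion hDdisj hDmeas, hDunion, measure_univ, one_mul]
      _ ≤ ENNReal.ofReal (1 + β) * q s := mul_le_mul_left hβof _
      _ = (ENNReal.ofReal (1 + β) • q) s := by simp [Measure.smul_apply]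
  -- cost bound
  have hf : Measurable fun z : X × X => ENNReal.ofReal (dist z.1 z.2) :=
    (ENNReal.continuous_ofReal.comp (continuous_fst.dist continuous_snd)).measurable
  have hgmeas : Measurable fun x => ENNReal.ofReal (infDist x (msupport q) + 2 * δ) :=
    (ENNReal.continuous_ofReal.comp ((continuous_infDist_pt _).add continuous_const)).measurable
  have hcost : ∫⁻ z, ENNReal.ofReal (dist z.1 z.2) ∂γ ≤ I + ε := by
    rw [hγdef, lintegral_sum_measure]
    have hterm : ∀ j, ∫⁻ z, ENNReal.ofReal (dist z.1 z.2) ∂((p.restrict (D j)).prod (ν j))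
        ≤ ∫⁻ x in D j, ENNReal.ofReal (infDist x (msupport q) + 2 * δ) ∂p := by
      intro j
      haveI : IsProbabilityMeasure (ν j) := ⟨hν1 j⟩
      rw [lintegral_prod _ hf.aemeasurable]
      refine setLIntegral_mono hgmeas fun x hx => ?_
      have hxC : dist x (c j) ≤ infDist x (msupport q) + δ := hDsub j hx
      have hνae : ∀ᵐ y ∂ν j, y ∈ B j := by
        rw [ae_iff]
        have : {y : X | ¬ y ∈ B j} = (B j)ᶜ := rfl
        rw [this, hνdef]
        simp only [Measure.smul_apply, smul_eq_mul]
        rw [Measure.restrict_apply (measurableSet_ball.compl)]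
        simp [hBdef]
      calc ∫⁻ y, ENNReal.ofReal (dist x y) ∂ν j
          ≤ ∫⁻ _, ENNReal.ofReal (infDist x (msupport q) + 2 * δ) ∂ν j := by
            apply lintegral_mono_ae
            filter_upwards [hνae] with y hy
            apply ENNReal.ofReal_le_ofReal
            have h1 : dist x y ≤ dist x (c j) + dist (c j) y := dist_triangle _ _ _
            have h2 : dist (c j) y < δ := by rwa [mem_ball, dist_comm] at hy
            linarith
        _ = ENNReal.ofReal (infDist x (msupport q) + 2 * δ) := by
            rw [lintegral_const, hν1 j, mul_one]
    calc ∑' j, ∫⁻ z, ENNReal.ofReal (dist z.1 z.2) ∂((p.restrict (D j)).prod (ν j))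
        ≤ ∑' j, ∫⁻ x in D j, ENNReal.ofReal (infDist x (msupport q) + 2 * δ) ∂p :=
          ENNReal.tsum_le_tsum hterm
      _ = ∫⁻ x in ⋃ j, D j, ENNReal.ofReal (infDist x (msupport q) + 2 * δ) ∂p :=
          (lintegral_iUnion hDmeas hDdisj _).symm
      _ = ∫⁻ x, ENNReal.ofReal (infDist x (msupport q) + 2 * δ) ∂p := by
          rw [hDunion, Measure.restrict_univ]
      _ = I + ENNReal.ofReal (2 * δ) := by
          rw [hIdef]
          have heq : ∀ x : X, ENNReal.ofReal (infDist x (msupport q) + 2 * δ)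
              = ENNReal.ofReal (infDist x (msupport q)) + ENNReal.ofReal (2 * δ) :=
            fun x => ENNReal.ofReal_add infDist_nonneg (by linarith)
          simp_rw [heq]
          rw [lintegral_add_right _ measurable_const, lintegral_const, measure_univ, mul_one]
      _ = I + ε := by
          congr 1
          rw [hδdef]
          rw [show 2 * ((ε : ℝ) / 2) = (ε : ℝ) by ring]
          exact ENNReal.ofReal_coe_nnreal
  calc ⨅ β' ∈ Ioi (0:ℝ), DWbeta β' p q ≤ DWbeta β p q := biInf_le _ hβpos
    _ ≤ ∫⁻ z, ENNReal.ofReal (dist z.1 z.2) ∂γ := iInf₂_le γ ⟨hfst, hsnd⟩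
    _ ≤ I + ε := hcost

lemma DWbeta_eq (hpc : IsCompact (msupport p)) (hqc : IsCompact (msupport q)) :
    (⨅ β ∈ Ioi (0:ℝ), DWbeta β p q) = ∫⁻ x, ENNReal.ofReal (infDist x (msupport q)) ∂p :=
  le_antisymm (iInf_DWbeta_le p q hpc hqc) (le_iInf₂ fun β _ => DWbeta_ge p q β)

lemma DWbeta_mono (β₁ β₂ : ℝ) (h12 : β₁ ≤ β₂) : DWbeta β₂ p q ≤ DWbeta β₁ p q := by
  apply le_iInf₂
  rintro γ ⟨hγ1, hγ2⟩
  refine iInf₂_le γ ⟨hγ1, hγ2.trans ?_⟩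
  refine Measure.le_intro fun s hs _ => ?_
  simp only [Measure.smul_apply, smul_eq_mul]
  exact mul_le_mul_left (ENNReal.ofReal_le_ofReal (by linarith)) _

end

/-- **Proposition 3.** For compactly supported probability measures,
`β ↦ D_W^β(p, q)` is nonincreasing, its infimum over `β > 0` is `∫ d(x, supp q) dp`, and
consequently the infimum of `D_W^{β₁,β₂}(p, q)` over `β₁, β₂ > 0` (the limit as
`β₁, β₂ → ∞`) equals the SSD divergence `D_△(p, q)`. -/
theorem beta_admissible_limit_is_ssd (n : ℕ)
    (p q : Measure (EuclideanSpace ℝ (Fin n)))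
    [IsProbabilityMeasure p] [IsProbabilityMeasure q]
    (hpc : IsCompact (msupport p)) (hqc : IsCompact (msupport q)) :
    (∀ β₁ β₂ : ℝ, 0 < β₁ → β₁ ≤ β₂ → DWbeta β₂ p q ≤ DWbeta β₁ p q) ∧
    ((⨅ β ∈ Set.Ioi (0 : ℝ), DWbeta β p q)
      = ∫⁻ x, ENNReal.ofReal (infDist x (msupport q)) ∂p) ∧
    (⨅ β₁ ∈ Set.Ioi (0 : ℝ), ⨅ β₂ ∈ Set.Ioi (0 : ℝ), DWsym β₁ β₂ p q) = Dtri p q := by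
  refine ⟨fun β₁ β₂ _ h12 => DWbeta_mono p q β₁ β₂ h12, DWbeta_eq p q hpc hqc, ?_⟩
  haveI : Nonempty (Ioi (0:ℝ)) := ⟨⟨1, mem_Ioi.2 one_pos⟩⟩
  have hA := DWbeta_eq p q hpc hqc
  have hB := DWbeta_eq q p hqc hpc
  have inner : ∀ a : ℝ≥0∞,
      (⨅ β₂ ∈ Ioi (0:ℝ), (a + DWbeta β₂ q p)) = a + ⨅ β₂ ∈ Ioi (0:ℝ), DWbeta β₂ q p := by
    intro a
    rw [← iInf_subtype'', ← iInf_subtype'', ENNReal.add_iInf]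
  calc ⨅ β₁ ∈ Ioi (0:ℝ), ⨅ β₂ ∈ Ioi (0:ℝ), DWsym β₁ β₂ p q
      = ⨅ β₁ ∈ Ioi (0:ℝ), (DWbeta β₁ p q + ⨅ β₂ ∈ Ioi (0:ℝ), DWbeta β₂ q p) := by
        simp only [DWsym]
        exact iInf_congr fun β₁ => iInf_congr fun _ => inner _
    _ = (⨅ β₁ ∈ Ioi (0:ℝ), DWbeta β₁ p q) + ⨅ β₂ ∈ Ioi (0:ℝ), DWbeta β₂ q p := by
        rw [← iInf_subtype'', ← iInf_subtype'' (f := fun β₁ => DWbeta β₁ p q), ENNReal.iInf_add]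
    _ = Dtri p q := by rw [hA, hB]; rfl
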